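/- Let $E \subset F \subset B_{1/2} \subset \mathbb{R}^d$ be measurable sets and $\iota > 0$ a constant. Assume $|E| < (1-\iota)|B_{1/2}|$ and that any open ball $B \subset B_{1/2}$ with $|E \cap B| > (1-\iota)|B|$ satisfies $B \subset F$. Then $|E| \le (1 - c\iota)|F|$ for some constant $c$ depending only on the dimension $d$ (one may take $c = 5^{-d}$). -/

import Mathlib

open MeasureTheory Metric Set Filter Topology

set_option maxHeartbeats 1000000

lemma vol_ball_eq (d : ℕ) (x : EuclideanSpace ℝ (Fin d)) {r : ℝ} (hr : 0 < r) :
    volume (ball x r) = ENNReal.ofReal (r ^ d)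
      * volume (ball (0 : EuclideanSpace ℝ (Fin d)) 1) := by
  simpa [finrank_euclideanSpace_fin] using
    Measure.addHaar_ball_of_pos (volume : Measure (EuclideanSpace ℝ (Fin d))) x hr

lemma vol_closedBall_eq (d : ℕ) (x : EuclideanSpace ℝ (Fin d)) {r : ℝ} (hr : 0 ≤ r) :
    volume (closedBall x r) = ENNReal.ofReal (r ^ d)
      * volume (ball (0 : EuclideanSpace ℝ (Fin d)) 1) := by
  simpa [finrank_euclideanSpace_fin] using
    Measure.addHaar_closedBall (volume : Measure (EuclideanSpace ℝ (Fin d))) x hr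

lemma exists_good_ball {d : ℕ} {E F : Set (EuclideanSpace ℝ (Fin d))} {ι : ℝ}
    (hι0 : 0 < ι) (hι1 : ι < 1) (hE : MeasurableSet E)
    (hvol : volume E ≤ ENNReal.ofReal (1 - ι)
      * volume (ball (0 : EuclideanSpace ℝ (Fin d)) (1/2)))
    (hEb : E ⊆ ball (0 : EuclideanSpace ℝ (Fin d)) (1/2))
    (hball : ∀ x r, 0 < r → ball x r ⊆ ball (0 : EuclideanSpace ℝ (Fin d)) (1/2) →
      ENNReal.ofReal (1 - ι) * volume (ball x r) < volume (E ∩ ball x r) → ball x r ⊆ F)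
    {x : EuclideanSpace ℝ (Fin d)} (hx : ‖x‖ < 1/2)
    {ε : ℝ} (hε0 : 0 < ε) (hεx : ε < 1/2 - ‖x‖)
    (hdens : ENNReal.ofReal (1 - ι) * volume (ball x ε) < volume (E ∩ ball x ε)) :
    ∃ (y : EuclideanSpace ℝ (Fin d)) (ρ : ℝ), 0 < ρ ∧ ρ ≤ 1/2 ∧ x ∈ ball y ρ ∧
      ball y ρ ⊆ F ∧ ENNReal.ofReal ι * volume (ball y ρ) ≤ volume (ball y ρ \ E) := by
  have hxn : (0:ℝ) ≤ ‖x‖ := norm_nonneg x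
  have hε2 : ε < 1/2 := by linarith
  set c : ℝ → EuclideanSpace ℝ (Fin d) := fun t => (1 - t) • x with hc
  set ρ : ℝ → ℝ := fun t => ε + t * (1/2 - ε) with hρdef
  have hρt : ∀ t : ℝ, ρ t = ε + t * (1/2 - ε) := fun t => rfl
  have hct : ∀ t : ℝ, ‖c t‖ = |1 - t| * ‖x‖ := by
    intro t; simp [hc, norm_smul]
  have hρpos : ∀ t : ℝ, 0 ≤ t → t ≤ 1 → 0 < ρ t := by
    intro t h0 h1; rw [hρt]; nlinarith
  have hρle : ∀ t : ℝ, 0 ≤ t → t ≤ 1 → ρ t ≤ 1/2 := by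
    intro t h0 h1; rw [hρt]; nlinarith
  have hsub : ∀ t : ℝ, 0 ≤ t → t ≤ 1 →
      ball (c t) (ρ t) ⊆ ball (0 : EuclideanSpace ℝ (Fin d)) (1/2) := by
    intro t h0 h1
    apply ball_subset_ball'
    rw [dist_zero_right, hct, abs_of_nonneg (by linarith : (0:ℝ) ≤ 1 - t), hρt]
    nlinarith
  have hmem : ∀ t : ℝ, 0 ≤ t → t ≤ 1 → x ∈ ball (c t) (ρ t) := by
    intro t h0 h1
    rw [mem_ball, dist_eq_norm]
    have : x - c t = t • x := by simp only [hc]; rw [sub_smul, one_smul]; abel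
    rw [this, norm_smul, Real.norm_eq_abs, abs_of_nonneg h0, hρt]
    nlinarith
  have hmono : ∀ s t : ℝ, 0 ≤ s → s ≤ t → t ≤ 1 →
      ball (c s) (ρ s) ⊆ ball (c t) (ρ t) := by
    intro s t h0 hst h1
    apply ball_subset_ball'
    have : c s - c t = (t - s) • x := by
      simp only [hc]; rw [← sub_smul]; congr 1; ring
    rw [dist_eq_norm, this, norm_smul, Real.norm_eq_abs, abs_of_nonneg (by linarith), hρt, hρt]
    nlinarith
  set S : Set ℝ := {t | t ∈ Icc (0:ℝ) 1 ∧ volume (E ∩ ball (c t) (ρ t)) ≤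
    ENNReal.ofReal (1 - ι) * volume (ball (c t) (ρ t))} with hS
  have hc1 : c 1 = 0 := by simp [hc]
  have hρ1 : ρ 1 = 1/2 := by rw [hρt]; ring
  have h1S : (1:ℝ) ∈ S := by
    refine ⟨⟨zero_le_one, le_rfl⟩, ?_⟩
    rw [hc1, hρ1, inter_eq_self_of_subset_left hEb]
    exact hvol
  have hc0 : c 0 = x := by simp [hc]
  have hρ0 : ρ 0 = ε := by rw [hρt]; ring
  have h0S : (0:ℝ) ∉ S := by
    intro h
    have h2 := h.2
    rw [hc0, hρ0] at h2
    exact absurd h2 (not_le.2 hdens)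
  have hSne : S.Nonempty := ⟨1, h1S⟩
  have hSbdd : BddBelow S := ⟨0, fun t ht => ht.1.1⟩
  set t₀ := sInf S with ht₀
  have ht₀0 : 0 ≤ t₀ := le_csInf hSne (fun t ht => ht.1.1)
  have ht₀1 : t₀ ≤ 1 := csInf_le hSbdd h1S
  have hnotS : ∀ t : ℝ, t < t₀ → t ∉ S := fun t hlt hS' =>
    absurd (csInf_le hSbdd hS') (not_le.2 hlt)
  have hFt : ∀ t : ℝ, 0 ≤ t → t ≤ 1 → t ∉ S → ball (c t) (ρ t) ⊆ F := by
    intro t h0 h1 hnot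
    refine hball _ _ (hρpos t h0 h1) (hsub t h0 h1) ?_
    by_contra hle
    exact hnot ⟨⟨h0, h1⟩, not_lt.1 hle⟩
  have hFsub : ball (c t₀) (ρ t₀) ⊆ F := by
    rcases eq_or_lt_of_le ht₀0 with h0 | h0
    · rw [← h0]; exact hFt 0 le_rfl zero_le_one h0S
    · intro y hy
      have hy' : dist y (c t₀) < ρ t₀ := mem_ball.1 hy
      set D := dist y (c t₀) with hD
      set M : ℝ := ‖x‖ + (1/2 - ε) with hM
      have hM0 : 0 < M := by rw [hM]; nlinarith
      set η : ℝ := (ρ t₀ - D) / (M + 1) with hη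
      have hη0 : 0 < η := div_pos (by linarith) (by linarith)
      set t := max 0 (t₀ - η) with htdef
      have ht0 : 0 ≤ t := le_max_left _ _
      have htlt : t < t₀ := max_lt h0 (by linarith)
      have htd : t₀ - t ≤ η := by
        have := le_max_right 0 (t₀ - η); linarith [le_max_right 0 (t₀ - η)]
      have hkey : η * (M + 1) = ρ t₀ - D := div_mul_cancel₀ _ (by linarith)
      have hmemy : y ∈ ball (c t) (ρ t) := by
        rw [mem_ball]
        have hdc : dist (c t₀) (c t) = (t₀ - t) * ‖x‖ := by
          have : c t₀ - c t = (t - t₀) • x := by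
            simp only [hc]; rw [← sub_smul]; congr 1; ring
          rw [dist_eq_norm, this, norm_smul, Real.norm_eq_abs,
            abs_of_nonpos (by linarith), neg_sub]
        have htri : dist y (c t) ≤ D + (t₀ - t) * ‖x‖ := by
          rw [← hdc]; exact dist_triangle y (c t₀) (c t)
        have h1' : (t₀ - t) * M ≤ η * M :=
          mul_le_mul_of_nonneg_right htd hM0.le
        have hρtt : ρ t = ρ t₀ - (t₀ - t) * (1/2 - ε) := by rw [hρt, hρt]; ring
        rw [hρtt]
        have hMexp : (t₀ - t) * M = (t₀ - t) * ‖x‖ + (t₀ - t) * (1/2 - ε) := by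
          rw [hM]; ring
        have hsplitη : η * (M + 1) = η * M + η := by ring
        clear_value D M η t
        simp only [hρt] at hy' hkey ⊢
        linarith
      exact hFt t ht0 (le_trans htlt.le ht₀1) (hnotS t htlt) hmemy
  set κ := volume (ball (0 : EuclideanSpace ℝ (Fin d)) 1) with hκ
  have hκtop : κ ≠ ⊤ := measure_ball_lt_top.ne
  have hupper : volume (E ∩ ball (c t₀) (ρ t₀)) ≤
      ENNReal.ofReal (1 - ι) * volume (ball (c t₀) (ρ t₀)) := by
    rcases eq_or_lt_of_le ht₀1 with h1 | h1
    · rw [h1]; exact h1S.2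
    · have key : ∀ u : ℝ, t₀ < u → u ≤ 1 → volume (E ∩ ball (c t₀) (ρ t₀)) ≤
          ENNReal.ofReal (1 - ι) * (ENNReal.ofReal (ρ u ^ d) * κ) := by
        intro u hu h1u
        obtain ⟨s, hsS, hsu⟩ := (csInf_lt_iff hSbdd hSne).1 hu
        have hst : t₀ ≤ s := csInf_le hSbdd hsS
        have hsu' : ρ s ≤ ρ u := by rw [hρt, hρt]; nlinarith [hsu.le]
        calc volume (E ∩ ball (c t₀) (ρ t₀))
            ≤ volume (E ∩ ball (c s) (ρ s)) :=
              measure_mono (inter_subset_inter_right _ (hmono t₀ s ht₀0 hst hsS.1.2))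
          _ ≤ ENNReal.ofReal (1 - ι) * volume (ball (c s) (ρ s)) := hsS.2
          _ ≤ ENNReal.ofReal (1 - ι) * (ENNReal.ofReal (ρ u ^ d) * κ) := by
              rw [vol_ball_eq d _ (hρpos s hsS.1.1 hsS.1.2), ← hκ]
              exact mul_le_mul_right (mul_le_mul_left
                (ENNReal.ofReal_le_ofReal
                  (pow_le_pow_left₀ (hρpos s hsS.1.1 hsS.1.2).le hsu' d)) κ) _
      have cont : Tendsto (fun u => ENNReal.ofReal (1 - ι) * (ENNReal.ofReal (ρ u ^ d) * κ))
          (𝓝[>] t₀) (𝓝 (ENNReal.ofReal (1 - ι) * (ENNReal.ofReal (ρ t₀ ^ d) * κ))) := by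
        have hcρ : Tendsto (fun u => ρ u ^ d) (𝓝[>] t₀) (𝓝 (ρ t₀ ^ d)) := by
          apply Tendsto.mono_left _ nhdsWithin_le_nhds
          exact ((continuous_const.add (continuous_id.mul continuous_const)).pow d).tendsto t₀
        refine ENNReal.Tendsto.const_mul ?_ (Or.inr ENNReal.ofReal_ne_top)
        exact ENNReal.Tendsto.mul_const (ENNReal.tendsto_ofReal hcρ) (Or.inr hκtop)
      rw [vol_ball_eq d _ (hρpos t₀ ht₀0 ht₀1), ← hκ]
      refine ge_of_tendsto cont ?_
      filter_upwards [Ioc_mem_nhdsGT_of_mem (⟨le_rfl, h1⟩ : t₀ ∈ Ico t₀ 1)] with u hu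
      exact key u hu.1 hu.2
  refine ⟨c t₀, ρ t₀, hρpos t₀ ht₀0 ht₀1, hρle t₀ ht₀0 ht₀1, hmem t₀ ht₀0 ht₀1, hFsub, ?_⟩
  set B := ball (c t₀) (ρ t₀) with hB
  have hfin : volume B ≠ ⊤ := measure_ball_lt_top.ne
  have hsplit : volume (B ∩ E) + volume (B \ E) = volume B := measure_inter_add_diff B hE
  have hone : ENNReal.ofReal ι * volume B + ENNReal.ofReal (1 - ι) * volume B = volume B := by
    rw [← add_mul, ← ENNReal.ofReal_add hι0.le (by linarith),
      (by ring : ι + (1 - ι) = 1), ENNReal.ofReal_one, one_mul]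
  have hstep : ENNReal.ofReal ι * volume B + ENNReal.ofReal (1 - ι) * volume B ≤
      volume (B \ E) + ENNReal.ofReal (1 - ι) * volume B := by
    rw [hone]
    calc volume B = volume (B ∩ E) + volume (B \ E) := hsplit.symm
      _ ≤ ENNReal.ofReal (1 - ι) * volume B + volume (B \ E) := by
          refine add_le_add_left ?_ _
          rw [inter_comm]; exact hupper
      _ = volume (B \ E) + ENNReal.ofReal (1 - ι) * volume B := add_comm _ _
  exact (ENNReal.add_le_add_iff_right (ENNReal.mul_ne_top ENNReal.ofReal_ne_top hfin)).1 hstep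

lemma vitali_step {d : ℕ} {E F : Set (EuclideanSpace ℝ (Fin d))} {ι : ℝ}
    (hι0 : 0 < ι) (hE : MeasurableSet E)
    (H : ∀ᵐ x : EuclideanSpace ℝ (Fin d), x ∈ E → ∃ y ρ, 0 < ρ ∧ ρ ≤ 1/2 ∧ x ∈ ball y ρ ∧
      ball y ρ ⊆ F ∧ ENNReal.ofReal ι * volume (ball y ρ) ≤ volume (ball y ρ \ E)) :
    ENNReal.ofReal ι * volume E ≤ ENNReal.ofReal ((5:ℝ)^d) * volume (F \ E) := by
  classical
  set E' : Set (EuclideanSpace ℝ (Fin d)) :=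
    {x | x ∈ E ∧ ∃ y ρ, 0 < ρ ∧ ρ ≤ 1/2 ∧ x ∈ ball y ρ ∧
      ball y ρ ⊆ F ∧ ENNReal.ofReal ι * volume (ball y ρ) ≤ volume (ball y ρ \ E)} with hE'
  have hnull : volume (E \ E') = 0 := by
    refine measure_mono_null ?_ (ae_iff.1 H)
    intro x hx
    simp only [mem_setOf_eq, not_forall]
    exact ⟨hx.1, fun q => hx.2 ⟨hx.1, q⟩⟩
  have hch : ∀ x, x ∈ E' → ∃ y ρ, 0 < ρ ∧ ρ ≤ 1/2 ∧ x ∈ ball y ρ ∧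
      ball y ρ ⊆ F ∧ ENNReal.ofReal ι * volume (ball y ρ) ≤ volume (ball y ρ \ E) :=
    fun x hx => hx.2
  choose! y ρ h1 h2 h3 h4 h5 using hch
  clear_value E'
  clear hE'
  obtain ⟨u, huE', hdisj, hcov⟩ :=
    Vitali.exists_disjoint_subfamily_covering_enlargement_closedBall E' y ρ (1/2)
      (fun a ha => h2 a ha) 5 (by norm_num)
  have hcnt : u.Countable := by
    refine Set.PairwiseDisjoint.countable_of_isOpen
      (s := fun b => ball (y b) (ρ b)) (hdisj.mono fun b => ball_subset_closedBall)
      (fun i _ => isOpen_ball) (fun i hi => ⟨y i, mem_ball_self (h1 i (huE' hi))⟩)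
  have hcov' : E' ⊆ ⋃ b ∈ u, closedBall (y b) (5 * ρ b) := by
    intro a ha
    obtain ⟨b, hb, hsub⟩ := hcov a ha
    exact mem_biUnion hb (hsub (ball_subset_closedBall (h3 a ha)))
  have hterm : ∀ b, b ∈ u → volume (closedBall (y b) (5 * ρ b)) =
      ENNReal.ofReal ((5:ℝ)^d) * volume (ball (y b) (ρ b)) := by
    intro b hb
    have hρb := h1 b (huE' hb)
    rw [vol_closedBall_eq d _ (by positivity), vol_ball_eq d _ hρb, mul_pow,
      ENNReal.ofReal_mul (by positivity), mul_assoc]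
  have hvolE : volume E ≤ ∑' b : u, volume (closedBall (y b.1) (5 * ρ b.1)) := by
    calc volume E ≤ volume E' + volume (E \ E') := by
          refine (measure_mono (fun x hx => ?_)).trans (measure_union_le _ _)
          by_cases h : x ∈ E'
          · exact Or.inl h
          · exact Or.inr ⟨hx, h⟩
      _ = volume E' := by rw [hnull, add_zero]
      _ ≤ volume (⋃ b ∈ u, closedBall (y b) (5 * ρ b)) := measure_mono hcov'
      _ ≤ ∑' b : u, volume (closedBall (y b.1) (5 * ρ b.1)) := measure_biUnion_le volume hcnt _
  have hdisj' : u.PairwiseDisjoint (fun b => ball (y b) (ρ b) \ E) :=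
    hdisj.mono fun b => diff_subset.trans ball_subset_closedBall
  have hms : ∀ b ∈ u, MeasurableSet (ball (y b) (ρ b) \ E) :=
    fun b _ => measurableSet_ball.diff hE
  have hA : ∑' b : u, volume (closedBall (y b.1) (5 * ρ b.1))
      = ENNReal.ofReal ((5:ℝ)^d) * ∑' b : u, volume (ball (y b.1) (ρ b.1)) := by
    rw [← ENNReal.tsum_mul_left]
    exact tsum_congr fun b => hterm b.1 b.2
  have hB : ∑' b : u, volume (ball (y b.1) (ρ b.1) \ E)
      = volume (⋃ b ∈ u, ball (y b) (ρ b) \ E) := (measure_biUnion hcnt hdisj' hms).symm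
  have hC : volume (⋃ b ∈ u, ball (y b) (ρ b) \ E) ≤ volume (F \ E) :=
    measure_mono (iUnion₂_subset fun b hb => diff_subset_diff_left (h4 b (huE' hb)))
  have hD : ENNReal.ofReal ι * ∑' b : u, volume (ball (y b.1) (ρ b.1))
      ≤ volume (F \ E) := by
    rw [← ENNReal.tsum_mul_left]
    calc ∑' b : u, ENNReal.ofReal ι * volume (ball (y b.1) (ρ b.1))
        ≤ ∑' b : u, volume (ball (y b.1) (ρ b.1) \ E) :=
          ENNReal.tsum_le_tsum fun b => h5 b.1 (huE' b.2)
      _ = volume (⋃ b ∈ u, ball (y b) (ρ b) \ E) := hB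
      _ ≤ volume (F \ E) := hC
  calc ENNReal.ofReal ι * volume E
      ≤ ENNReal.ofReal ι * ∑' b : u, volume (closedBall (y b.1) (5 * ρ b.1)) :=
        mul_le_mul_right hvolE _
    _ = ENNReal.ofReal ((5:ℝ)^d) * (ENNReal.ofReal ι * ∑' b : u, volume (ball (y b.1) (ρ b.1))) := by
        rw [hA, mul_left_comm]
    _ ≤ ENNReal.ofReal ((5:ℝ)^d) * volume (F \ E) := mul_le_mul_right hD _

/-- The crawling ink spots covering lemma (elliptic version). -/
theorem stmt6 (d : ℕ) :
    ∃ c : ℝ, 0 < c ∧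
      ∀ (E F : Set (EuclideanSpace ℝ (Fin d))) (ι : ℝ), 0 < ι →
        MeasurableSet E → MeasurableSet F →
        E ⊆ F → F ⊆ ball (0 : EuclideanSpace ℝ (Fin d)) (1/2) →
        volume E < ENNReal.ofReal (1 - ι) *
          volume (ball (0 : EuclideanSpace ℝ (Fin d)) (1/2)) →
        (∀ (x : EuclideanSpace ℝ (Fin d)) (r : ℝ), 0 < r →
          ball x r ⊆ ball (0 : EuclideanSpace ℝ (Fin d)) (1/2) →
          ENNReal.ofReal (1 - ι) * volume (ball x r) < volume (E ∩ ball x r) →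
          ball x r ⊆ F) →
        volume E ≤ ENNReal.ofReal (1 - c * ι) * volume F := by
  refine ⟨1 / (2 * 5 ^ d), by positivity, ?_⟩
  intro E F ι hι0 hE hF hEF hFb hvol hball
  by_cases hι1 : ι < 1
  swap
  · exfalso
    have h0 : ENNReal.ofReal (1 - ι) = 0 :=
      ENNReal.ofReal_eq_zero.2 (by linarith [not_lt.1 hι1])
    rw [h0, zero_mul] at hvol
    simp at hvol
  have hEb : E ⊆ ball (0 : EuclideanSpace ℝ (Fin d)) (1/2) := hEF.trans hFb
  have hdens := Besicovitch.ae_tendsto_measure_inter_div_of_measurableSet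
    (volume : Measure (EuclideanSpace ℝ (Fin d))) hE
  have H : ∀ᵐ x : EuclideanSpace ℝ (Fin d), x ∈ E → ∃ y ρ, 0 < ρ ∧ ρ ≤ 1/2 ∧ x ∈ ball y ρ ∧
      ball y ρ ⊆ F ∧ ENNReal.ofReal ι * volume (ball y ρ) ≤ volume (ball y ρ \ E) := by
    filter_upwards [hdens] with x hx hxE
    have hx5 : ‖x‖ < 1/2 := mem_ball_zero_iff.1 (hEb hxE)
    rw [Set.indicator_of_mem hxE, Pi.one_apply] at hx
    have h1 : ENNReal.ofReal (1 - ι) < 1 := by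
      rw [← ENNReal.ofReal_one]
      exact (ENNReal.ofReal_lt_ofReal_iff (by norm_num)).2 (by linarith)
    have hev : ∀ᶠ r in 𝓝[>] (0:ℝ), ENNReal.ofReal (1 - ι) <
        volume (E ∩ closedBall x r) / volume (closedBall x r) :=
      hx.eventually_const_lt h1
    have hIoo : Ioo (0:ℝ) (1/2 - ‖x‖) ∈ 𝓝[>] (0:ℝ) :=
      Ioo_mem_nhdsGT_of_mem ⟨le_rfl, by linarith⟩
    obtain ⟨ε, hεlt, hε⟩ := (hev.and (eventually_of_mem hIoo (fun _ h => h))).exists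
    have hcb0 : volume (closedBall x ε) ≠ 0 := (measure_closedBall_pos _ _ hε.1).ne'
    have hcbt : volume (closedBall x ε) ≠ ⊤ := measure_closedBall_lt_top.ne
    have hlt : ENNReal.ofReal (1 - ι) * volume (closedBall x ε) < volume (E ∩ closedBall x ε) :=
      (ENNReal.lt_div_iff_mul_lt (Or.inl hcb0) (Or.inl hcbt)).1 hεlt
    have hsph : volume (sphere x ε) = 0 :=
      Measure.addHaar_sphere_of_ne_zero (volume : Measure (EuclideanSpace ℝ (Fin d))) x hε.1.ne'
    have e1 : volume (closedBall x ε) = volume (ball x ε) := by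
      rw [vol_closedBall_eq d x hε.1.le, vol_ball_eq d x hε.1]
    have e2 : volume (E ∩ closedBall x ε) ≤ volume (E ∩ ball x ε) := by
      calc volume (E ∩ closedBall x ε) ≤ volume ((E ∩ ball x ε) ∪ sphere x ε) := by
            refine measure_mono (fun z hz => ?_)
            rcases lt_or_eq_of_le (mem_closedBall.1 hz.2) with h | h
            · exact Or.inl ⟨hz.1, h⟩
            · exact Or.inr h
        _ ≤ volume (E ∩ ball x ε) + volume (sphere x ε) := measure_union_le _ _
        _ = volume (E ∩ ball x ε) := by rw [hsph, add_zero]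
    have hlt' : ENNReal.ofReal (1 - ι) * volume (ball x ε) < volume (E ∩ ball x ε) := by
      rw [← e1]; exact lt_of_lt_of_le hlt e2
    exact exists_good_ball hι0 hι1 hE hvol.le hEb hball hx5 hε.1 hε.2 hlt'
  have key := vitali_step hι0 hE H
  -- final real-number arithmetic
  have hFfin : volume F ≠ ⊤ := ((measure_mono hFb).trans_lt measure_ball_lt_top).ne
  have hEfin : volume E ≠ ⊤ := ((measure_mono hEF).trans_lt (lt_top_iff_ne_top.2 hFfin)).ne
  set A := (volume E).toReal with hA
  set B := (volume F).toReal with hB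
  have hA0 : 0 ≤ A := ENNReal.toReal_nonneg
  have hAB : A ≤ B := ENNReal.toReal_mono hFfin (measure_mono hEF)
  have hdiffR : (volume (F \ E)).toReal = B - A := by
    rw [measure_diff hEF hE.nullMeasurableSet hEfin,
      ENNReal.toReal_sub_of_le (measure_mono hEF) hFfin]
  have hdfin : volume (F \ E) ≠ ⊤ := ((measure_mono diff_subset).trans_lt
    (lt_top_iff_ne_top.2 hFfin)).ne
  have keyR : ι * A ≤ (5:ℝ)^d * (B - A) := by
    have h := ENNReal.toReal_mono (ENNReal.mul_ne_top ENNReal.ofReal_ne_top hdfin) key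
    rw [ENNReal.toReal_mul, ENNReal.toReal_mul, ENNReal.toReal_ofReal hι0.le,
      ENNReal.toReal_ofReal (by positivity), hdiffR] at h
    exact h
  set P : ℝ := (5:ℝ)^d with hP
  have hP1 : (1:ℝ) ≤ P := one_le_pow₀ (by norm_num : (1:ℝ) ≤ 5)
  have hP0 : (0:ℝ) < P := by linarith
  have t1 : 0 ≤ (2*P - ι) * (P*B - P*A - ι*A) := by
    apply mul_nonneg (by linarith)
    nlinarith [keyR]
  have t2 : 0 ≤ (ι*A) * (P - ι) := mul_nonneg (mul_nonneg hι0.le hA0) (by linarith)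
  have hgoal2 : 2*P*A ≤ (2*P - ι) * B := by nlinarith [t1, t2]
  have hc1 : (0:ℝ) ≤ 1 - (1 / (2 * 5 ^ d)) * ι := by
    have : (1 / (2 * 5 ^ d)) * ι ≤ 1/2 := by
      rw [div_mul_eq_mul_div, div_le_iff₀ (by positivity)]
      nlinarith [hP1, hP]
    linarith
  have final : A ≤ (1 - (1 / (2 * 5 ^ d)) * ι) * B := by
    have heq : (1 - (1 / (2 * 5 ^ d)) * ι) * B = (2*P - ι) * B / (2*P) := by
      rw [hP]; field_simp
    rw [heq, le_div_iff₀ (by positivity)]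
    linarith [hgoal2]
  calc volume E = ENNReal.ofReal A := (ENNReal.ofReal_toReal hEfin).symm
    _ ≤ ENNReal.ofReal ((1 - (1 / (2 * 5 ^ d)) * ι) * B) := ENNReal.ofReal_le_ofReal final
    _ = ENNReal.ofReal (1 - (1 / (2 * 5 ^ d)) * ι) * ENNReal.ofReal B :=
        ENNReal.ofReal_mul hc1
    _ = ENNReal.ofReal (1 - 1 / (2 * 5 ^ d) * ι) * volume F := by
        rw [hB, ENNReal.ofReal_toReal hFfin]
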